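/- For every ε > 0 there exists N₀ such that for all positive integers n_p, n_q with min(n_p, n_q) ≥ N₀: Σ_{r=1}^{min(n_p,n_q)} (1/r) Σ_{r'=1}^{r} 1/(n_q − r' + 2) ≤ π²/6 + ε. -/
import Mathlib


open MeasureTheory ProbabilityTheory Filter
open scoped ENNReal

namespace ClassEF

variable {A B : Type*}

/-- A set of edges of a bipartite graph is a matching if every vertex
appears in at most one edge. -/
def IsMatching (M : Finset (A × B)) : Prop :=
  (∀ e ∈ M, ∀ e' ∈ M, e.1 = e'.1 → e = e') ∧
  (∀ e ∈ M, ∀ e' ∈ M, e.2 = e'.2 → e = e')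

/-- Total weight of a set of edges. -/
def weightSum (w : A → B → ℝ) (M : Finset (A × B)) : ℝ :=
  ∑ e ∈ M, w e.1 e.2

/-- A left vertex is covered by a matching. -/
def coveredA (M : Finset (A × B)) (a : A) : Prop := ∃ b, (a, b) ∈ M

/-- A right vertex is covered by a matching. -/
def coveredB (M : Finset (A × B)) (b : B) : Prop := ∃ a, (a, b) ∈ M

/-- `M` is a maximum-weight matching among the matchings with `r` edges in the
(complete bipartite) subgraph induced by `A'` and `B'`. -/
def IsMaxMatchingOfSize [DecidableEq A] [DecidableEq B]
    (w : A → B → ℝ) (A' : Finset A) (B' : Finset B) (r : ℕ)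
    (M : Finset (A × B)) : Prop :=
  IsMatching M ∧ M ⊆ A' ×ˢ B' ∧ M.card = r ∧
  ∀ M' : Finset (A × B), IsMatching M' → M' ⊆ A' ×ˢ B' → M'.card = r →
    weightSum w M' ≤ weightSum w M

/-- `M` is a maximum-weight matching (among matchings of arbitrary size). -/
def IsMaxWeightMatching (w : A → B → ℝ) (M : Finset (A × B)) : Prop :=
  IsMatching M ∧ ∀ M' : Finset (A × B), IsMatching M' → weightSum w M' ≤ weightSum w M

open scoped Classical in
/-- The assignment valuation: the maximum total weight of a matching between
the agents of `Np` and the items of `S`. -/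
noncomputable def vval [DecidableEq A] [DecidableEq B]
    (w : A → B → ℝ) (Np : Finset A) (S : Finset B) : ℝ :=
  ((Np ×ˢ S).powerset.filter fun M => IsMatching M).sup'
    ⟨∅, by simp [IsMatching]⟩ (weightSum w)

/-- The set of items matched to an agent of `S` under the matching `M`. -/
def bundleOf [DecidableEq A] [DecidableEq B] (M : Finset (A × B)) (S : Finset A) : Finset B :=
  (M.filter fun e => e.1 ∈ S).image Prod.snd

/-- The total utility received by the agents of `S` under the matching `M`. -/
def classUtil [DecidableEq A] (w : A → B → ℝ) (M : Finset (A × B)) (S : Finset A) : ℝ :=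
  ∑ e ∈ M.filter (fun e => e.1 ∈ S), w e.1 e.2

/-- Class envy-freeness. -/
def ClassEnvyFree [DecidableEq A] [DecidableEq B] {k : ℕ}
    (w : A → B → ℝ) (cls : Fin k → Finset A) (M : Finset (A × B)) : Prop :=
  ∀ p q : Fin k, p ≠ q → vval w (cls p) (bundleOf M (cls q)) ≤ classUtil w M (cls p)

/-- Item `j` is wasted for the matching `M`. -/
def Wasted [DecidableEq A] [DecidableEq B] {k : ℕ}
    (w : A → B → ℝ) (cls : Fin k → Finset A) (M : Finset (A × B)) (j : B) : Prop :=
  ((∀ i : A, (i, j) ∉ M) ∧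
    ∃ p, vval w (cls p) (bundleOf M (cls p)) < vval w (cls p) (insert j (bundleOf M (cls p)))) ∨
  (∃ q, j ∈ bundleOf M (cls q) ∧
    vval w (cls q) (bundleOf M (cls q)) = vval w (cls q) ((bundleOf M (cls q)).erase j) ∧
    ∃ p, p ≠ q ∧
      vval w (cls p) (bundleOf M (cls p)) < vval w (cls p) (insert j (bundleOf M (cls p))))

/-- A matching is non-wasteful if no item is wasted. -/
def NonWasteful [DecidableEq A] [DecidableEq B] {k : ℕ}
    (w : A → B → ℝ) (cls : Fin k → Finset A) (M : Finset (A × B)) : Prop :=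
  ∀ j : B, ¬ Wasted w cls M j

/-- `cls` partitions the agents into `k` disjoint nonempty classes. -/
def IsClassPartition {n k : ℕ} (cls : Fin k → Finset (Fin n)) : Prop :=
  (∀ p, (cls p).Nonempty) ∧ (∀ p q : Fin k, p ≠ q → Disjoint (cls p) (cls q)) ∧
  Finset.univ.biUnion cls = (Finset.univ : Finset (Fin n))

/-- The maximum class size. -/
def maxClassSize {n k : ℕ} (cls : Fin k → Finset (Fin n)) : ℕ :=
  Finset.univ.sup fun p => (cls p).card

/-- The minimum class size. -/
noncomputable def minClassSize {n k : ℕ} (cls : Fin k → Finset (Fin n)) : ℕ :=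
  sInf (Set.range fun p => (cls p).card)

/-- Marginal value of the item `j` for the bundle `S` of a class with agent set `Np`. -/
noncomputable def marginalVal [DecidableEq A] [DecidableEq B]
    (w : A → B → ℝ) (Np : Finset A) (S : Finset B) (j : B) : ℝ :=
  vval w Np (insert j S) - vval w Np S

/-- The items remaining once each class `p` holds the bundle `Bu p`. -/
def remainingItems [Fintype B] [DecidableEq B] {k : ℕ} (Bu : Fin k → Finset B) : Finset B :=
  Finset.univ \ Finset.univ.biUnion Bu

/-- One selection step of class `p` in the round-robin algorithm, acting on the
tuple of current bundles: if some remaining item has positive marginal value,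
class `p` adds to its bundle a remaining item of maximum marginal value;
otherwise nothing happens. -/
def ClassStep [Fintype B] [DecidableEq A] [DecidableEq B] {k : ℕ}
    (w : A → B → ℝ) (cls : Fin k → Finset A) (p : Fin k)
    (Bu Bu' : Fin k → Finset B) : Prop :=
  (∃ j ∈ remainingItems Bu,
      0 < marginalVal w (cls p) (Bu p) j ∧
      (∀ j' ∈ remainingItems Bu,
        marginalVal w (cls p) (Bu p) j' ≤ marginalVal w (cls p) (Bu p) j) ∧
      Bu' = Function.update Bu p (insert j (Bu p))) ∨
  ((∀ j ∈ remainingItems Bu, marginalVal w (cls p) (Bu p) j ≤ 0) ∧ Bu' = Bu)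

/-- One round of the round-robin algorithm: the classes `p = 0, …, k-1` perform
their selection steps in increasing order. -/
def RoundStep [Fintype B] [DecidableEq A] [DecidableEq B] {k : ℕ}
    (w : A → B → ℝ) (cls : Fin k → Finset A) (Bu Bu' : Fin k → Finset B) : Prop :=
  ∃ f : Fin (k + 1) → Fin k → Finset B,
    f 0 = Bu ∧ f (Fin.last k) = Bu' ∧
    ∀ p : Fin k, ClassStep w cls p (f p.castSucc) (f p.succ)

/-- `M` is a possible output of the round-robin algorithm: starting from empty
bundles, rounds are performed until no class assigns positive marginal value to
any remaining item, and `M` is obtained by matching each class `p` with its final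
bundle `Bu p` via a maximum-weight matching. -/
def IsRoundRobinOutput [Fintype B] [DecidableEq A] [DecidableEq B] {k : ℕ}
    (w : A → B → ℝ) (cls : Fin k → Finset A) (M : Finset (A × B)) : Prop :=
  ∃ Bu : Fin k → Finset B,
    Relation.ReflTransGen (RoundStep w cls) (fun _ => ∅) Bu ∧
    (∀ p, ∀ j ∈ remainingItems Bu, marginalVal w (cls p) (Bu p) j ≤ 0) ∧
    IsMatching M ∧
    (∀ p : Fin k, ∀ e ∈ M, e.1 ∈ cls p → e.2 ∈ Bu p) ∧
    (∀ p : Fin k, classUtil w M (cls p) = vval w (cls p) (Bu p))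

/-- An `(α,β)`-PDF-bounded distribution on `[0,1]`: it has a density bounded
between `a` and `b` on `[0,1]` and vanishing outside `[0,1]`. -/
def PDFBounded (D : Measure ℝ) (a b : ℝ) : Prop :=
  ∃ f : ℝ → ℝ,
    (∀ x ∈ Set.Icc (0 : ℝ) 1, a ≤ f x ∧ f x ≤ b) ∧
    (∀ x, x ∉ Set.Icc (0 : ℝ) 1 → f x = 0) ∧
    D = MeasureTheory.volume.withDensity fun x => ENNReal.ofReal (f x)

/-- The reversed exponential distribution `ReExp(λ)`, with density
`λ e^{-λ(1-x)}` on `(-∞, 1]`. -/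
noncomputable def reExp (lam : ℝ) : Measure ℝ :=
  MeasureTheory.volume.withDensity fun x =>
    ENNReal.ofReal (if x ≤ 1 then lam * Real.exp (-lam * (1 - x)) else 0)

/-- An acceptable alternating path of length `ℓ` for the threshold `w0`, of the
matching `Mopt`, inside the bipartite graph on right vertex set `S`: it visits
distinct matched left vertices `i 0, …, i (ℓ-1)` and ends in an unmatched right
vertex `j'`, and all its non-matching edges have weight at least `w0`. -/
def AcceptablePath (w : A → B → ℝ) (S : Finset B)
    (Mopt : Finset (A × B)) (w0 : ℝ) (ℓ : ℕ) : Prop :=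
  ∃ hℓ : 0 < ℓ, ∃ (i : Fin ℓ → A) (b : Fin ℓ → B) (j' : B),
    Function.Injective i ∧
    (∀ t, (i t, b t) ∈ Mopt) ∧
    j' ∈ S ∧ (∀ a : A, (a, j') ∉ Mopt) ∧
    (∀ t : Fin ℓ, ∀ ht : (t : ℕ) + 1 < ℓ, w0 ≤ w (i t) (b ⟨(t : ℕ) + 1, ht⟩)) ∧
    w0 ≤ w (i ⟨ℓ - 1, Nat.sub_lt hℓ Nat.one_pos⟩) j'

/-- An acceptable alternating cycle of length `ℓ` for the threshold `w0`, of the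
matching `Mopt`: it visits distinct matched left vertices `i 0, …, i (ℓ-1)` and
all its non-matching edges have weight at least `w0`. -/
def AcceptableCycle (w : A → B → ℝ)
    (Mopt : Finset (A × B)) (w0 : ℝ) (ℓ : ℕ) : Prop :=
  ∃ hℓ : 0 < ℓ, ∃ (i : Fin ℓ → A) (b : Fin ℓ → B),
    Function.Injective i ∧
    (∀ t, (i t, b t) ∈ Mopt) ∧
    ∀ t : Fin ℓ, w0 ≤ w (i t) (b ⟨((t : ℕ) + 1) % ℓ, Nat.mod_lt _ hℓ⟩)

end ClassEF


open Finset in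
private lemma stmt18_reflectH (N : ℕ) :
    ∑ s ∈ range N, (1 / ((N : ℝ) - s)) = ∑ k ∈ range N, 1 / ((k : ℝ) + 1) := by
  rw [← Finset.sum_range_reflect (fun k => 1 / ((k : ℝ) + 1)) N]
  refine Finset.sum_congr rfl fun s hs => ?_
  rw [Finset.mem_range] at hs
  have h1 : (N - 1 - s : ℕ) = N - (s + 1) := by omega
  rw [h1]
  have h2 : ((N - (s + 1) : ℕ) : ℝ) = (N : ℝ) - (s + 1) := by
    rw [Nat.cast_sub (by omega)]; push_cast; ring
  rw [h2]; ring_nf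

open Finset in
private lemma stmt18_keyR : ∀ N : ℕ,
    ∑ r ∈ range N, (1 / ((r : ℝ) + 1)) * ∑ s ∈ range (r + 1), (1 / ((N : ℝ) - s))
      = ∑ k ∈ range N, (1 / ((k : ℝ) + 1)) ^ 2 := by
  intro N
  induction N with
  | zero => simp
  | succ N ih =>
    have inner_eq : ∀ r ∈ range N,
        ∑ s ∈ range (r + 1), (1 / ((N : ℝ) + 1 - s))
          = ∑ s ∈ range (r + 1), (1 / ((N : ℝ) - s))
            + (1 / ((N : ℝ) + 1) - 1 / ((N : ℝ) - r)) := by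
      intro r hr
      have tel : ∑ s ∈ range (r + 1), (1 / ((N : ℝ) + 1 - s) - 1 / ((N : ℝ) - s))
          = 1 / ((N : ℝ) + 1) - 1 / ((N : ℝ) - r) := by
        have h := Finset.sum_range_sub (fun s : ℕ => -(1 / ((N : ℝ) + 1 - s))) (r + 1)
        have h2 : ∀ s : ℕ, -(1 / ((N : ℝ) + 1 - ((s : ℕ) + 1 : ℕ))) - -(1 / ((N : ℝ) + 1 - s))
            = 1 / ((N : ℝ) + 1 - s) - 1 / ((N : ℝ) - s) := by
          intro s; push_cast; ring_nf
        calc ∑ s ∈ range (r + 1), (1 / ((N : ℝ) + 1 - s) - 1 / ((N : ℝ) - s))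
            = ∑ s ∈ range (r + 1),
                (-(1 / ((N : ℝ) + 1 - ((s + 1 : ℕ) : ℕ))) - -(1 / ((N : ℝ) + 1 - s))) := by
              exact Finset.sum_congr rfl fun s _ => (h2 s).symm
          _ = -(1 / ((N : ℝ) + 1 - ((r + 1 : ℕ) : ℕ))) - -(1 / ((N : ℝ) + 1 - (0 : ℕ))) := h
          _ = 1 / ((N : ℝ) + 1) - 1 / ((N : ℝ) - r) := by push_cast; ring_nf
      have hd := Finset.sum_sub_distrib (f := fun s : ℕ => 1 / ((N : ℝ) + 1 - s))
        (g := fun s : ℕ => 1 / ((N : ℝ) - s)) (s := range (r + 1))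
      linarith [tel, hd]
    have cross : ∑ r ∈ range N, (1 / ((r : ℝ) + 1)) * (1 / ((N : ℝ) - r))
        = (1 / ((N : ℝ) + 1)) * ((∑ k ∈ range N, 1 / ((k : ℝ) + 1))
            + ∑ k ∈ range N, 1 / ((k : ℝ) + 1)) := by
      have hpt : ∀ r ∈ range N, (1 / ((r : ℝ) + 1)) * (1 / ((N : ℝ) - r))
          = (1 / ((N : ℝ) + 1)) * (1 / ((r : ℝ) + 1) + 1 / ((N : ℝ) - r)) := by
        intro r hr
        rw [Finset.mem_range] at hr
        have h1 : ((r : ℝ) + 1) ≠ 0 := by positivity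
        have h2 : ((N : ℝ) - r) ≠ 0 := by
          have : (r : ℝ) + 1 ≤ N := by exact_mod_cast hr
          intro h; rw [sub_eq_zero] at h; nlinarith
        have h3 : ((N : ℝ) + 1) ≠ 0 := by positivity
        field_simp
        ring
      rw [Finset.sum_congr rfl hpt, ← Finset.mul_sum, Finset.sum_add_distrib, stmt18_reflectH N]
    have main : ∑ r ∈ range N, (1 / ((r : ℝ) + 1)) * ∑ s ∈ range (r + 1), (1 / ((N : ℝ) + 1 - s))
        = (∑ r ∈ range N, (1 / ((r : ℝ) + 1)) * ∑ s ∈ range (r + 1), (1 / ((N : ℝ) - s)))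
          + (1 / ((N : ℝ) + 1)) * (∑ k ∈ range N, 1 / ((k : ℝ) + 1))
          - ∑ r ∈ range N, (1 / ((r : ℝ) + 1)) * (1 / ((N : ℝ) - r)) := by
      rw [Finset.sum_congr rfl (fun r hr => by rw [inner_eq r hr])]
      rw [Finset.mul_sum]
      rw [← Finset.sum_add_distrib, ← Finset.sum_sub_distrib]
      exact Finset.sum_congr rfl fun r hr => by ring
    have hrefl : ∑ s ∈ range (N + 1), (1 / ((N : ℝ) + 1 - s))
        = ∑ k ∈ range (N + 1), 1 / ((k : ℝ) + 1) := by
      have := stmt18_reflectH (N + 1); push_cast at this ⊢; convert this using 2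
    push_cast
    rw [Finset.sum_range_succ, Finset.sum_range_succ (f := fun k => (1 / ((k : ℝ) + 1)) ^ 2)]
    rw [main, cross, hrefl, Finset.sum_range_succ (f := fun k => 1 / ((k : ℝ) + 1)), ih]
    ring

open Finset in
private lemma stmt18_Icc_one_sum (M : ℕ) (f : ℕ → ℝ) :
    ∑ r ∈ Finset.Icc 1 M, f r = ∑ r ∈ range M, f (r + 1) := by
  rw [← Finset.Ico_add_one_right_eq_Icc, Finset.sum_Ico_eq_sum_range]
  simp [Nat.add_comm]

/-- the double sum `Σ_{r=1}^{min(n_p,n_q)} (1/r) Σ_{r'=1}^{r}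
1/(n_q − r' + 2)` is at most `π²/6 + ε` once `min(n_p, n_q)` is large enough. -/
theorem stmt18 :
    ∀ ε > (0 : ℝ), ∃ N₀ : ℕ, ∀ np nq : ℕ, 0 < np → 0 < nq → N₀ ≤ min np nq →
      ∑ r ∈ Finset.Icc 1 (min np nq), (1 / (r : ℝ)) *
          ∑ r' ∈ Finset.Icc 1 r, 1 / ((nq : ℝ) - (r' : ℝ) + 2) ≤
        Real.pi ^ 2 / 6 + ε := by
  intro ε hε
  refine ⟨0, fun np nq hnp hnq _ => ?_⟩
  have hm : min np nq ≤ nq + 1 := le_trans (min_le_right _ _) (by omega)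
  have step1 : ∑ r ∈ Finset.Icc 1 (min np nq), (1 / (r : ℝ)) *
          ∑ r' ∈ Finset.Icc 1 r, 1 / ((nq : ℝ) - (r' : ℝ) + 2)
      ≤ ∑ r ∈ Finset.Icc 1 (nq + 1), (1 / (r : ℝ)) *
          ∑ r' ∈ Finset.Icc 1 r, 1 / ((nq : ℝ) - (r' : ℝ) + 2) := by
    apply Finset.sum_le_sum_of_subset_of_nonneg (Finset.Icc_subset_Icc_right hm)
    intro r hr _
    rw [Finset.mem_Icc] at hr
    have hin : ∀ r' ∈ Finset.Icc 1 r, (0 : ℝ) ≤ 1 / ((nq : ℝ) - (r' : ℝ) + 2) := by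
      intro r' hr'
      rw [Finset.mem_Icc] at hr'
      have : (r' : ℝ) ≤ (nq : ℝ) + 1 := by exact_mod_cast le_trans hr'.2 hr.2
      have : (0 : ℝ) < (nq : ℝ) - (r' : ℝ) + 2 := by linarith
      positivity
    have h1 := Finset.sum_nonneg hin
    have h2 : (0 : ℝ) ≤ 1 / (r : ℝ) := by positivity
    positivity
  have step2 : ∑ r ∈ Finset.Icc 1 (nq + 1), (1 / (r : ℝ)) *
          ∑ r' ∈ Finset.Icc 1 r, 1 / ((nq : ℝ) - (r' : ℝ) + 2)
      = ∑ k ∈ Finset.range (nq + 1), (1 / ((k : ℝ) + 1)) ^ 2 := by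
    rw [← stmt18_keyR (nq + 1), stmt18_Icc_one_sum]
    refine Finset.sum_congr rfl fun r _ => ?_
    rw [stmt18_Icc_one_sum]
    congr 1
    · push_cast; ring
    refine Finset.sum_congr rfl fun s _ => ?_
    push_cast; ring_nf
  have step3 : ∑ k ∈ Finset.range (nq + 1), (1 / ((k : ℝ) + 1)) ^ 2 ≤ Real.pi ^ 2 / 6 := by
    have hb := hasSum_zeta_two
    have h2 : ∑ k ∈ Finset.range (nq + 1), (1 / ((k : ℝ) + 1)) ^ 2
        = ∑ k ∈ Finset.range (nq + 2), 1 / (k : ℝ) ^ 2 := by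
      rw [Finset.sum_range_succ' (fun k => 1 / (k : ℝ) ^ 2) (nq + 1)]
      simp [div_pow]
    rw [h2]
    exact sum_le_hasSum _ (fun i _ => by positivity) hb
  linarith
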